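/- Let k be a field, let m, p ≥ 1 and n = m + p, and assume (n−1)! ≠ 0 in k. Let f : Fin m → Polynomial k with each f i of degree < n, and let H be the k-subspace of polynomials g of degree < n satisfying ⟨g, f i⟩ = 0 for all i ∈ Fin m. Then for every s ∈ k, the Wronskian Wr(f) evaluated at s is zero if and only if there exists a nonzero polynomial lying in both H and F_m(s), i.e. H ⊓ F_m(s) ≠ ⊥. -/

import Mathlib

open Polynomial

/-- The Wronskian of a family `f : Fin m → Polynomial k`. -/
noncomputable def Wr {k : Type*} [Field k] {m : ℕ} (f : Fin m → Polynomial k) : Polynomial k :=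
  Matrix.det (Matrix.of fun i j : Fin m => Polynomial.derivative^[(i : ℕ)] (f j))

/-- The `j`-th derivative of the rational normal curve `γ(s) = ∑_{r<n} s^r X^r`. -/
noncomputable def gammaDeriv {k : Type*} [Field k] (n : ℕ) (s : k) (j : ℕ) : Polynomial k :=
  ∑ r ∈ Finset.range n, Polynomial.C ((Nat.descFactorial r j : k) * s ^ (r - j)) * Polynomial.X ^ r

/-- The pairing `⟨g, f⟩ = ∑_r (coeff r g) * (coeff r f)`. -/
noncomputable def pairing {k : Type*} [Field k] (g f : Polynomial k) : k :=
  ∑ r ∈ g.support, g.coeff r * f.coeff r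

section Aux

variable {k : Type*} [Field k]

lemma coeff_gammaDeriv (n : ℕ) (s : k) (j r : ℕ) :
    (gammaDeriv n s j).coeff r =
      if r < n then (Nat.descFactorial r j : k) * s ^ (r - j) else 0 := by
  simp only [gammaDeriv, finset_sum_coeff, coeff_C_mul, coeff_X_pow, mul_ite, mul_one, mul_zero,
    Finset.sum_ite_eq, Finset.mem_range]

lemma degree_gammaDeriv_lt (n : ℕ) (s : k) (j : ℕ) : (gammaDeriv n s j).degree < n := by
  rw [Polynomial.degree_lt_iff_coeff_zero]
  intro r hr
  rw [coeff_gammaDeriv, if_neg (by omega)]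

lemma pairing_eq_sum_range {g : Polynomial k} {N : ℕ} (h : g.degree < N) (q : Polynomial k) :
    pairing g q = ∑ r ∈ Finset.range N, g.coeff r * q.coeff r := by
  refine Finset.sum_subset ?_ ?_
  · intro r hr
    rw [Polynomial.mem_support_iff] at hr
    rw [Finset.mem_range]
    exact_mod_cast (Polynomial.le_degree_of_ne_zero hr).trans_lt h
  · intro r _ hr
    rw [Polynomial.notMem_support_iff] at hr
    simp [hr]

lemma eval_iter_deriv_eq_pairing {n : ℕ} (hn : 0 < n) (s : k) (i : ℕ) {g : Polynomial k}
    (hg : g.degree < n) :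
    Polynomial.eval s (Polynomial.derivative^[i] g) = pairing (gammaDeriv n s i) g := by
  have hgn : g.natDegree < n := by
    rcases eq_or_ne g 0 with rfl | hg0
    · simpa using hn
    · exact (Polynomial.natDegree_lt_iff_degree_lt hg0).mpr hg
  have hcoeff0 : ∀ r, n ≤ r → g.coeff r = 0 := by
    intro r hr
    exact Polynomial.coeff_eq_zero_of_degree_lt (hg.trans_le (by exact_mod_cast hr))
  have hd : (Polynomial.derivative^[i] g).natDegree < n :=
    ((Polynomial.natDegree_iterate_derivative g i).trans (Nat.sub_le _ _)).trans_lt hgn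
  rw [Polynomial.eval_eq_sum_range' hd, pairing_eq_sum_range (degree_gammaDeriv_lt n s i) g]
  have hL : ∀ t, (Polynomial.derivative^[i] g).coeff t * s ^ t =
      ((t + i).descFactorial i : k) * g.coeff (t + i) * s ^ t := by
    intro t
    rw [Polynomial.coeff_iterate_derivative, nsmul_eq_mul]
  simp only [hL]
  have hR : ∀ r ∈ Finset.range n, (gammaDeriv n s i).coeff r * g.coeff r =
      ((Nat.descFactorial r i : k) * s ^ (r - i)) * g.coeff r := by
    intro r hr
    rw [coeff_gammaDeriv, if_pos (Finset.mem_range.mp hr)]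
  rw [Finset.sum_congr rfl hR]
  -- extend the RHS sum to `range (i + n)` (extra terms vanish as `g.coeff r = 0`)
  have h1 : ∑ r ∈ Finset.range n, ((Nat.descFactorial r i : k) * s ^ (r - i)) * g.coeff r
      = ∑ r ∈ Finset.range (i + n), ((Nat.descFactorial r i : k) * s ^ (r - i)) * g.coeff r := by
    refine Finset.sum_subset (Finset.range_subset_range.mpr (by omega)) ?_
    intro r hr hr'
    rw [Finset.mem_range] at hr hr'
    rw [hcoeff0 r (by omega), mul_zero]
  rw [h1, Finset.range_eq_Ico, Finset.range_eq_Ico, ← Finset.sum_Ico_consecutive _ (Nat.zero_le i) (by omega : i ≤ i + n)]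
  have h2 : ∑ r ∈ Finset.Ico 0 i, ((Nat.descFactorial r i : k) * s ^ (r - i)) * g.coeff r = 0 := by
    apply Finset.sum_eq_zero
    intro r hr
    rw [Finset.mem_Ico] at hr
    rw [Nat.descFactorial_eq_zero_iff_lt.mpr hr.2]
    norm_num
  rw [h2, zero_add, Finset.sum_Ico_eq_sum_range, Finset.sum_Ico_eq_sum_range]
  refine Finset.sum_congr (by rw [Nat.sub_zero, Nat.add_sub_cancel_left]) ?_
  intro t _
  have e1 : 0 + t + i = i + t := by omega
  have e2 : i + t - i = t := by omega
  have e3 : 0 + t = t := by omega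
  rw [e1, e2, e3]
  ring

lemma gammaDeriv_indep {m n : ℕ} (hmn : m ≤ n) (hn : 0 < n) (s : k)
    (hfac : ((Nat.factorial (n - 1) : k) ≠ 0))
    {c : Fin m → k} (hc : ∑ i : Fin m, c i • gammaDeriv n s (i : ℕ) = 0) : c = 0 := by
  by_contra hne
  have hex : ∃ t : ℕ, ∃ h : t < m, c ⟨t, h⟩ ≠ 0 := by
    obtain ⟨i, hi⟩ := Function.ne_iff.mp hne
    exact ⟨i, i.2, by simpa using hi⟩
  classical
  set t0 := Nat.find hex with ht0def
  obtain ⟨ht0m, hct0⟩ := Nat.find_spec hex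
  have hmin : ∀ j : Fin m, (j : ℕ) < t0 → c j = 0 := by
    intro j hj
    by_contra hcj
    exact Nat.find_min hex hj ⟨j.2, by simpa using hcj⟩
  have hcoeff := congrArg (fun q => Polynomial.coeff q t0) hc
  simp only [Polynomial.finset_sum_coeff, Polynomial.coeff_smul, coeff_gammaDeriv,
    Polynomial.coeff_zero, smul_eq_mul] at hcoeff
  rw [Finset.sum_eq_single (⟨t0, ht0m⟩ : Fin m)] at hcoeff
  · rw [if_pos (by omega), Nat.descFactorial_self, Nat.sub_self, pow_zero, mul_one] at hcoeff
    have hfact : (Nat.factorial t0 : k) ≠ 0 := by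
      obtain ⟨d, hd⟩ := Nat.factorial_dvd_factorial (show t0 ≤ n - 1 by omega)
      intro h0
      apply hfac
      rw [hd]
      push_cast
      rw [h0, zero_mul]
    rcases mul_eq_zero.mp hcoeff with h | h
    · exact hct0 h
    · exact hfact h
  · intro b _ hb
    rcases lt_trichotomy (b : ℕ) t0 with hlt | heq | hgt
    · rw [hmin b hlt, zero_mul]
    · exact absurd (Fin.ext heq) hb
    · rw [if_pos (by omega), Nat.descFactorial_eq_zero_iff_lt.mpr hgt]
      simp
  · intro h
    exact absurd (Finset.mem_univ _) h

end Aux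

theorem wronskian_eval_zero_iff_meets_osculating {k : Type*} [Field k] (m p n : ℕ)
    (hm : 1 ≤ m) (hp : 1 ≤ p) (hn : n = m + p)
    (hfac : ((Nat.factorial (n - 1) : k) ≠ 0))
    (f : Fin m → Polynomial k) (hf : ∀ i, (f i).degree < n)
    (H : Submodule k (Polynomial k))
    (hH : ∀ g : Polynomial k, g ∈ H ↔ (g.degree < n ∧ ∀ i : Fin m, pairing g (f i) = 0))
    (s : k) :
    Polynomial.eval s (Wr f) = 0 ↔
      H ⊓ Submodule.span k (Set.range fun j : Fin m => gammaDeriv n s (j : ℕ)) ≠ ⊥ := by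
  classical
  have hn0 : 0 < n := by omega
  have hmn : m ≤ n := by omega
  set M : Matrix (Fin m) (Fin m) k :=
    Matrix.of fun i j : Fin m => pairing (gammaDeriv n s (i : ℕ)) (f j) with hMdef
  have hWr : Polynomial.eval s (Wr f) = M.det := by
    unfold Wr
    rw [show Polynomial.eval s = (Polynomial.evalRingHom s : Polynomial k →+* k) from rfl,
      RingHom.map_det]
    congr 1
    ext i j
    simp only [RingHom.mapMatrix_apply, Matrix.map_apply, Matrix.of_apply, coe_evalRingHom,
      hMdef]
    exact eval_iter_deriv_eq_pairing hn0 s (i : ℕ) (hf j)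
  -- key translation of linear combinations
  have hcomb : ∀ (c : Fin m → k) (j : Fin m),
      pairing (∑ i : Fin m, c i • gammaDeriv n s (i : ℕ)) (f j) = ∑ i : Fin m, c i * M i j := by
    intro c j
    have hdeg : (∑ i : Fin m, c i • gammaDeriv n s (i : ℕ)).degree < n := by
      refine (Polynomial.degree_sum_le _ _).trans_lt ?_
      rw [Finset.sup_lt_iff (by exact_mod_cast WithBot.bot_lt_coe n)]
      intro i _
      exact (Polynomial.degree_smul_le _ _).trans_lt (degree_gammaDeriv_lt n s i)
    rw [pairing_eq_sum_range hdeg]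
    have : ∀ r ∈ Finset.range n,
        (∑ i : Fin m, c i • gammaDeriv n s (i : ℕ)).coeff r * (f j).coeff r
          = ∑ i : Fin m, c i * ((gammaDeriv n s (i : ℕ)).coeff r * (f j).coeff r) := by
      intro r _
      rw [Polynomial.finset_sum_coeff, Finset.sum_mul]
      apply Finset.sum_congr rfl
      intro i _
      rw [Polynomial.coeff_smul, smul_eq_mul, mul_assoc]
    rw [Finset.sum_congr rfl this, Finset.sum_comm]
    apply Finset.sum_congr rfl
    intro i _
    rw [← Finset.mul_sum, hMdef]
    simp only [Matrix.of_apply]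
    rw [pairing_eq_sum_range (degree_gammaDeriv_lt n s (i : ℕ))]
  rw [hWr, ← Matrix.exists_vecMul_eq_zero_iff]
  constructor
  · rintro ⟨c, hc0, hcM⟩
    set g : Polynomial k := ∑ i : Fin m, c i • gammaDeriv n s (i : ℕ) with hgdef
    have hg0 : g ≠ 0 := by
      intro h
      exact hc0 (gammaDeriv_indep hmn hn0 s hfac (hgdef ▸ h))
    rw [Submodule.ne_bot_iff _]
    refine ⟨g, Submodule.mem_inf.mpr ⟨?_, ?_⟩, hg0⟩
    · rw [hH]
      constructor
      · refine (Polynomial.degree_sum_le _ _).trans_lt ?_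
        rw [Finset.sup_lt_iff (by exact_mod_cast WithBot.bot_lt_coe n)]
        intro i _
        exact (Polynomial.degree_smul_le _ _).trans_lt (degree_gammaDeriv_lt n s i)
      · intro j
        rw [hgdef, hcomb c j]
        have := congrFun hcM j
        simpa [Matrix.vecMul, dotProduct] using this
    · exact (Submodule.mem_span_range_iff_exists_fun k).mpr ⟨c, rfl⟩
  · intro hne
    obtain ⟨g, hg, hg0⟩ := (Submodule.ne_bot_iff _).mp hne
    obtain ⟨hgH, hgS⟩ := Submodule.mem_inf.mp hg
    obtain ⟨c, hc⟩ := (Submodule.mem_span_range_iff_exists_fun k).mp hgS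
    refine ⟨c, ?_, ?_⟩
    · intro h
      apply hg0
      rw [← hc, h]
      simp
    · funext j
      have := (hH g).mp hgH |>.2 j
      rw [← hc, hcomb c j] at this
      simpa [Matrix.vecMul, dotProduct] using this
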